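/- Let A and A' be symmetric matrices with nonnegative entries on a finite vertex set V of size n, having identical strictly positive degrees d_i = Σ_j A[i,j] = Σ_j A'[i,j] > 0. Let C and C' be partitions of V into k blocks each, all blocks having strictly positive volume with respect to d, and let H and H' be their normalized indicator matrices: H[i,m] = √d_i/√vol(C_m) if i ∈ C_m and 0 otherwise (similarly for H' with C'). Then the degree-normalized pairwise distances satisfy PD(A, H) − PD(A', H') = 2 · ( Σ_{m=1}^{k} N_asso(C'_m | A') − Σ_{m=1}^{k} N_asso(C_m | A) ), where PD(M, U) = Σ_{i,j∈V} M[i,j] · ‖U_{i,·}/√d_i − U_{j,·}/√d_j‖². -/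

import Mathlib

open Finset Matrix

/-- Degree of vertex `i`: `d_i = ∑_j M[i,j]`. -/
noncomputable def deg {V : Type*} [Fintype V] (M : V → V → ℝ) (i : V) : ℝ :=
  ∑ j, M i j

/-- `assoc(S, T | M) = ∑_{s∈S, t∈T} M[s,t]`. -/
noncomputable def assoc {V : Type*} (M : V → V → ℝ) (S T : Finset V) : ℝ :=
  ∑ s ∈ S, ∑ t ∈ T, M s t

/-- The block of the partition (given by the labelling `cl`) with label `m`. -/
def block {V ι : Type*} [Fintype V] [DecidableEq ι] (cl : V → ι) (m : ι) : Finset V :=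
  univ.filter fun i => cl i = m

/-- Volume of a set of vertices with respect to the degrees `d`. -/
noncomputable def vol {V : Type*} (d : V → ℝ) (S : Finset V) : ℝ :=
  ∑ i ∈ S, d i

/-- Normalized association `N_asso(C_m | M) = assoc(C_m, C_m | M) / vol(C_m)`. -/
noncomputable def Nasso {V ι : Type*} [Fintype V] [DecidableEq ι]
    (d : V → ℝ) (M : V → V → ℝ) (cl : V → ι) (m : ι) : ℝ :=
  assoc M (block cl m) (block cl m) / vol d (block cl m)

/-- The normalized indicator matrix `H` of a partition:
`H[i,m] = √d_i / √vol(C_m)` if `i ∈ C_m`, else `0`. -/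
noncomputable def indMat {V : Type*} [Fintype V] [DecidableEq V] {k : ℕ}
    (d : V → ℝ) (cl : V → Fin k) : Matrix V (Fin k) ℝ :=
  Matrix.of fun i m =>
    if cl i = m then Real.sqrt (d i) / Real.sqrt (vol d (block cl m)) else 0

/-- Degree-normalized pairwise distance
`PD(M, U) = ∑_{i,j} M[i,j] · ‖U_{i,·}/√d_i − U_{j,·}/√d_j‖²`. -/
noncomputable def PD {V : Type*} [Fintype V] {k : ℕ}
    (d : V → ℝ) (M : V → V → ℝ) (U : Matrix V (Fin k) ℝ) : ℝ :=
  ∑ i, ∑ j, M i j *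
    ‖(show EuclideanSpace ℝ (Fin k) from WithLp.toLp 2
        fun m => U i m / Real.sqrt (d i) - U j m / Real.sqrt (d j))‖ ^ 2

lemma key {V : Type*} [Fintype V] [DecidableEq V] {k : ℕ}
    (d : V → ℝ) (M : V → V → ℝ) (cl : V → Fin k)
    (hd : ∀ i, 0 < d i)
    (hrow : ∀ i, ∑ j, M i j = d i) (hcol : ∀ j, ∑ i, M i j = d j)
    (hvol : ∀ m, 0 < vol d (block cl m)) :
    PD d M (indMat d cl) = 2 * k - 2 * ∑ m, Nasso d M cl m := by
  have hnorm : ∀ x : EuclideanSpace ℝ (Fin k), ‖x‖ ^ 2 = ∑ m, x m ^ 2 := by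
    intro x
    rw [EuclideanSpace.norm_eq, Real.sq_sqrt (by positivity)]
    simp [sq_abs]
  set g : V → Fin k → ℝ :=
    fun i m => if cl i = m then (Real.sqrt (vol d (block cl m)))⁻¹ else 0 with hg
  have hgdef : ∀ i m, indMat d cl i m / Real.sqrt (d i) = g i m := by
    intro i m
    simp only [indMat, of_apply, hg]
    split
    · rw [div_div, mul_comm, ← div_div, div_self (ne_of_gt (Real.sqrt_pos.mpr (hd i))), one_div]
    · simp
  have hgsq : ∀ i, ∑ m, g i m ^ 2 = (vol d (block cl (cl i)))⁻¹ := by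
    intro i
    have h1 : ∀ m, g i m ^ 2 = if cl i = m then (vol d (block cl m))⁻¹ else 0 := by
      intro m; simp only [hg]; split
      · rw [← Real.sqrt_inv, Real.sq_sqrt (inv_nonneg.mpr (hvol _).le)]
      · simp
    simp only [h1]
    rw [Finset.sum_ite_eq]; simp
  have hgmul : ∀ i j, ∑ m, g i m * g j m
      = if cl i = cl j then (vol d (block cl (cl i)))⁻¹ else 0 := by
    intro i j
    by_cases h : cl i = cl j
    · rw [if_pos h]
      have h1 : ∀ m, g i m * g j m = g i m ^ 2 := by
        intro m; simp only [hg, ← h]; ring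
      simp only [h1]; exact hgsq i
    · rw [if_neg h]
      apply Finset.sum_eq_zero
      intro m _
      rcases eq_or_ne (cl i) m with h1 | h1
      · have h2 : cl j ≠ m := fun hh => h (h1.trans hh.symm)
        simp [hg, h1, h2]
      · simp [hg, h1]
  have hterm : ∀ i j, M i j * ‖(show EuclideanSpace ℝ (Fin k) from WithLp.toLp 2
      fun m => indMat d cl i m / Real.sqrt (d i) - indMat d cl j m / Real.sqrt (d j))‖ ^ 2
      = M i j * (vol d (block cl (cl i)))⁻¹ + M i j * (vol d (block cl (cl j)))⁻¹
        - 2 * (M i j * (if cl i = cl j then (vol d (block cl (cl i)))⁻¹ else 0)) := by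
    intro i j
    rw [hnorm]
    have h1 : ∑ m, (indMat d cl i m / Real.sqrt (d i) - indMat d cl j m / Real.sqrt (d j)) ^ 2
        = ∑ m, (g i m ^ 2 + g j m ^ 2 - 2 * (g i m * g j m)) := by
      apply Finset.sum_congr rfl; intro m _
      rw [hgdef, hgdef]; ring
    show M i j * (∑ m, (indMat d cl i m / Real.sqrt (d i) - indMat d cl j m / Real.sqrt (d j)) ^ 2) = _
    rw [h1, Finset.sum_sub_distrib, Finset.sum_add_distrib, ← Finset.mul_sum, hgsq, hgsq, hgmul]
    ring
  unfold PD
  simp only [hterm]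
  rw [Finset.sum_congr rfl (fun i _ => Finset.sum_sub_distrib _ _),
      Finset.sum_sub_distrib,
      Finset.sum_congr rfl (fun i _ => Finset.sum_add_distrib),
      Finset.sum_add_distrib]
  have S1 : ∑ i, ∑ _j : V, M i _j * (vol d (block cl (cl i)))⁻¹ = (k : ℝ) := by
    have h1 : ∀ i, ∑ _j : V, M i _j * (vol d (block cl (cl i)))⁻¹
        = d i * (vol d (block cl (cl i)))⁻¹ := by
      intro i; rw [← Finset.sum_mul, hrow]
    simp only [h1]
    rw [← Finset.sum_fiberwise univ cl (fun i => d i * (vol d (block cl (cl i)))⁻¹)]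
    have h2 : ∀ m : Fin k, ∑ i ∈ univ.filter (fun i => cl i = m),
        d i * (vol d (block cl (cl i)))⁻¹ = 1 := by
      intro m
      have h3 : ∀ i ∈ univ.filter (fun i => cl i = m),
          d i * (vol d (block cl (cl i)))⁻¹ = d i * (vol d (block cl m))⁻¹ := by
        intro i hi
        rw [Finset.mem_filter] at hi
        rw [hi.2]
      rw [Finset.sum_congr rfl h3, ← Finset.sum_mul]
      have : ∑ i ∈ univ.filter (fun i => cl i = m), d i = vol d (block cl m) := rfl
      rw [this, mul_inv_cancel₀ (hvol m).ne']
    rw [Finset.sum_congr rfl (fun m _ => h2 m)]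
    simp
  have S2 : ∑ i, ∑ j : V, M i j * (vol d (block cl (cl j)))⁻¹ = (k : ℝ) := by
    rw [Finset.sum_comm]
    have h1 : ∀ j, ∑ i : V, M i j * (vol d (block cl (cl j)))⁻¹
        = d j * (vol d (block cl (cl j)))⁻¹ := by
      intro j; rw [← Finset.sum_mul, hcol]
    simp only [h1]
    rw [← Finset.sum_fiberwise univ cl (fun i => d i * (vol d (block cl (cl i)))⁻¹)]
    have h2 : ∀ m : Fin k, ∑ i ∈ univ.filter (fun i => cl i = m),
        d i * (vol d (block cl (cl i)))⁻¹ = 1 := by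
      intro m
      have h3 : ∀ i ∈ univ.filter (fun i => cl i = m),
          d i * (vol d (block cl (cl i)))⁻¹ = d i * (vol d (block cl m))⁻¹ := by
        intro i hi
        rw [Finset.mem_filter] at hi
        rw [hi.2]
      rw [Finset.sum_congr rfl h3, ← Finset.sum_mul]
      have : ∑ i ∈ univ.filter (fun i => cl i = m), d i = vol d (block cl m) := rfl
      rw [this, mul_inv_cancel₀ (hvol m).ne']
    rw [Finset.sum_congr rfl (fun m _ => h2 m)]
    simp
  have S3 : ∑ i, ∑ j : V, 2 * (M i j * (if cl i = cl j then (vol d (block cl (cl i)))⁻¹ else 0))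
      = 2 * ∑ m, Nasso d M cl m := by
    simp only [← Finset.mul_sum]
    congr 1
    rw [← Finset.sum_fiberwise univ cl
      (fun i => ∑ j : V, M i j * (if cl i = cl j then (vol d (block cl (cl i)))⁻¹ else 0))]
    apply Finset.sum_congr rfl
    intro m _
    have h3 : ∀ i ∈ univ.filter (fun i => cl i = m),
        (∑ j : V, M i j * (if cl i = cl j then (vol d (block cl (cl i)))⁻¹ else 0))
        = ∑ j ∈ block cl m, M i j * (vol d (block cl m))⁻¹ := by
      intro i hi
      rw [Finset.mem_filter] at hi
      rw [hi.2]
      rw [show (block cl m) = univ.filter (fun j => cl j = m) from rfl, Finset.sum_filter]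
      apply Finset.sum_congr rfl
      intro j _
      by_cases h : cl j = m
      · simp [h]
      · have h2 : ¬ (m = cl j) := fun hh => h hh.symm
        simp [h, h2]
    rw [Finset.sum_congr rfl h3]
    simp only [← Finset.sum_mul]
    rw [Nasso, assoc, div_eq_mul_inv]
    rfl
  rw [S1, S2, S3]
  ring

theorem stmt17 {V : Type*} [Fintype V] [DecidableEq V] {k : ℕ}
    (A A' : V → V → ℝ)
    (hsym : ∀ i j, A i j = A j i) (hsym' : ∀ i j, A' i j = A' j i)
    (hnn : ∀ i j, 0 ≤ A i j) (hnn' : ∀ i j, 0 ≤ A' i j)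
    (hdeq : ∀ i, deg A i = deg A' i) (hd : ∀ i, 0 < deg A i)
    (cl cl' : V → Fin k)
    (hpart : Function.Surjective cl) (hpart' : Function.Surjective cl')
    (hvol : ∀ m : Fin k, 0 < vol (deg A) (block cl m))
    (hvol' : ∀ m : Fin k, 0 < vol (deg A) (block cl' m)) :
    PD (deg A) A (indMat (deg A) cl) - PD (deg A) A' (indMat (deg A) cl')
      = 2 * ((∑ m : Fin k, Nasso (deg A) A' cl' m)
              - (∑ m : Fin k, Nasso (deg A) A cl m)) := by
  have hrowA : ∀ i, ∑ j, A i j = deg A i := fun i => rfl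
  have hcolA : ∀ j, ∑ i, A i j = deg A j := by
    intro j; simp only [deg]
    exact Finset.sum_congr rfl fun i _ => hsym i j
  have hrowA' : ∀ i, ∑ j, A' i j = deg A i := by
    intro i; rw [hdeq i]; rfl
  have hcolA' : ∀ j, ∑ i, A' i j = deg A j := by
    intro j; rw [hdeq j]; simp only [deg]
    exact Finset.sum_congr rfl fun i _ => hsym' i j
  rw [key (deg A) A cl hd hrowA hcolA hvol,
      key (deg A) A' cl' hd hrowA' hcolA' hvol']
  ring
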